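/- arXiv:1209.2221 — 2 statements merged into one kernel-verified Lean document; each statement's English description precedes it below -/
import Mathlib

section
/- Let ρ_AB be a bipartite density operator on H_A ⊗ H_B (finite-dimensional), and let {M_k} be an informationally complete POVM on H_A with all outcome probabilities p_k = Tr[(M_k ⊗ I) ρ_AB] positive. If all conditional states ρ_{B|k} = Tr_A[(M_k ⊗ I) ρ_AB]/p_k pairwise commute, then ρ_AB can be written in the zero-discord form ρ_AB = Σ_j σ_j ⊗ |j⟩⟨j| for some orthonormal basis {|j⟩} of H_B and positive semidefinite operators σ_j on H_A. -/
open Matrix Kronecker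
open scoped ComplexOrder

/-- Partial trace over the first (A) factor. -/
noncomputable def ptraceA {nA nB : ℕ}
    (M : Matrix (Fin nA × Fin nB) (Fin nA × Fin nB) ℂ) :
    Matrix (Fin nB) (Fin nB) ℂ :=
  fun j j' => ∑ i : Fin nA, M (i, j) (i, j')

/-- Rank-one outer product |v⟩⟨v|. -/
noncomputable def outer {n : ℕ} (v : Fin n → ℂ) : Matrix (Fin n) (Fin n) ℂ :=
  fun i i' => v i * star (v i')

/-- An orthonormal family of vectors. -/
def OrthonormalFam {n m : ℕ} (v : Fin m → Fin n → ℂ) : Prop :=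
  ∀ j j', (∑ i, star (v j i) * v j' i) = if j = j' then 1 else 0

lemma ptraceA_mul_kron_apply {nA nB : ℕ} (X : Matrix (Fin nA) (Fin nA) ℂ)
    (ρ : Matrix (Fin nA × Fin nB) (Fin nA × Fin nB) ℂ) (j j' : Fin nB) :
    ptraceA ((X ⊗ₖ (1 : Matrix (Fin nB) (Fin nB) ℂ)) * ρ) j j'
      = ∑ i, ∑ a, X i a * ρ (a, j) (i, j') := by
  unfold ptraceA
  simp only [Matrix.mul_apply, Fintype.sum_prod_type, Matrix.kroneckerMap_apply,
    Matrix.one_apply, mul_ite, mul_one, mul_zero, ite_mul, zero_mul]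
  refine Finset.sum_congr rfl fun i _ => Finset.sum_congr rfl fun a _ => ?_
  simp

lemma ptraceA_herm {nA nB : ℕ} {X : Matrix (Fin nA) (Fin nA) ℂ}
    {ρ : Matrix (Fin nA × Fin nB) (Fin nA × Fin nB) ℂ}
    (hX : X.IsHermitian) (hρ : ρ.IsHermitian) :
    (ptraceA ((X ⊗ₖ (1 : Matrix (Fin nB) (Fin nB) ℂ)) * ρ)).IsHermitian := by
  rw [Matrix.IsHermitian]
  ext j j'
  rw [Matrix.conjTranspose_apply, ptraceA_mul_kron_apply, ptraceA_mul_kron_apply]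
  rw [star_sum, Finset.sum_comm]
  refine Finset.sum_congr rfl fun i _ => ?_
  rw [star_sum]
  refine Finset.sum_congr rfl fun a _ => ?_
  rw [star_mul']
  rw [hX.apply, hρ.apply]


lemma ptraceA_kron_add {nA nB : ℕ} (X Y : Matrix (Fin nA) (Fin nA) ℂ)
    (ρ : Matrix (Fin nA × Fin nB) (Fin nA × Fin nB) ℂ) :
    ptraceA (((X + Y) ⊗ₖ (1 : Matrix (Fin nB) (Fin nB) ℂ)) * ρ)
      = ptraceA ((X ⊗ₖ (1 : Matrix (Fin nB) (Fin nB) ℂ)) * ρ)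
        + ptraceA ((Y ⊗ₖ (1 : Matrix (Fin nB) (Fin nB) ℂ)) * ρ) := by
  ext j j'
  simp only [Matrix.add_apply, ptraceA_mul_kron_apply, Matrix.add_apply, add_mul,
    Finset.sum_add_distrib]

lemma ptraceA_kron_smul {nA nB : ℕ} (c : ℂ) (X : Matrix (Fin nA) (Fin nA) ℂ)
    (ρ : Matrix (Fin nA × Fin nB) (Fin nA × Fin nB) ℂ) :
    ptraceA (((c • X) ⊗ₖ (1 : Matrix (Fin nB) (Fin nB) ℂ)) * ρ)
      = c • ptraceA ((X ⊗ₖ (1 : Matrix (Fin nB) (Fin nB) ℂ)) * ρ) := by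
  ext j j'
  simp only [Matrix.smul_apply, ptraceA_mul_kron_apply, smul_eq_mul, Finset.mul_sum]
  exact Finset.sum_congr rfl fun i _ => Finset.sum_congr rfl fun a _ => by ring

lemma ptraceA_kron_zero {nA nB : ℕ}
    (ρ : Matrix (Fin nA × Fin nB) (Fin nA × Fin nB) ℂ) :
    ptraceA (((0 : Matrix (Fin nA) (Fin nA) ℂ) ⊗ₖ (1 : Matrix (Fin nB) (Fin nB) ℂ)) * ρ) = 0 := by
  ext j j'
  rw [ptraceA_mul_kron_apply]
  simp

lemma ptraceA_kron_std {nA nB : ℕ} (a c : Fin nA)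
    (ρ : Matrix (Fin nA × Fin nB) (Fin nA × Fin nB) ℂ) (m m' : Fin nB) :
    ptraceA ((Matrix.single a c (1:ℂ) ⊗ₖ (1 : Matrix (Fin nB) (Fin nB) ℂ)) * ρ) m m'
      = ρ (c, m) (a, m') := by
  rw [ptraceA_mul_kron_apply]
  simp [Matrix.single, ite_and, Finset.sum_ite_eq, Matrix.of_apply]

lemma dot_mulVec_expand {n : Type*} [Fintype n] (v u : n → ℂ) (N : Matrix n n ℂ) :
    star v ⬝ᵥ (N *ᵥ u) = ∑ m, ∑ m', star (v m) * N m m' * u m' := by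
  simp only [dotProduct, Matrix.mulVec, Pi.star_apply, Finset.mul_sum]
  exact Finset.sum_congr rfl fun m _ => Finset.sum_congr rfl fun m' _ => by ring

set_option maxHeartbeats 1000000 in
set_option maxHeartbeats 1000000 in
theorem stmt4 {nA nB : ℕ} {ι : Type*} [Fintype ι]
    (ρAB : Matrix (Fin nA × Fin nB) (Fin nA × Fin nB) ℂ)
    (hρAB : ρAB.PosSemidef) (hρtr : ρAB.trace = 1)
    (M : ι → Matrix (Fin nA) (Fin nA) ℂ)
    (hpsd : ∀ k, (M k).PosSemidef)
    (hsum : ∑ k, M k = 1)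
    (hIC : Submodule.span ℂ (Set.range M) = ⊤)
    (hpos : ∀ k, 0 < ((M k ⊗ₖ (1 : Matrix (Fin nB) (Fin nB) ℂ)) * ρAB).trace)
    (hcomm : ∀ k k',
      letI ρBk := (((M k ⊗ₖ (1 : Matrix (Fin nB) (Fin nB) ℂ)) * ρAB).trace)⁻¹ •
        ptraceA ((M k ⊗ₖ (1 : Matrix (Fin nB) (Fin nB) ℂ)) * ρAB)
      letI ρBk' := (((M k' ⊗ₖ (1 : Matrix (Fin nB) (Fin nB) ℂ)) * ρAB).trace)⁻¹ •
        ptraceA ((M k' ⊗ₖ (1 : Matrix (Fin nB) (Fin nB) ℂ)) * ρAB)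
      ρBk * ρBk' = ρBk' * ρBk) :
    ∃ (w : Fin nB → Fin nB → ℂ) (σ : Fin nB → Matrix (Fin nA) (Fin nA) ℂ),
      OrthonormalFam w ∧ (∀ j, (σ j).PosSemidef) ∧
      ρAB = ∑ j, (σ j) ⊗ₖ outer (w j) := by
  classical
  set S : ι → Matrix (Fin nB) (Fin nB) ℂ :=
    fun k => ptraceA ((M k ⊗ₖ (1 : Matrix (Fin nB) (Fin nB) ℂ)) * ρAB) with hSdef
  have hSherm : ∀ k, (S k).IsHermitian := fun k => ptraceA_herm (hpsd k).1 hρAB.1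
  have hpk : ∀ k, (((M k ⊗ₖ (1 : Matrix (Fin nB) (Fin nB) ℂ)) * ρAB).trace) ≠ 0 :=
    fun k => (hpos k).ne'
  have hScomm : ∀ k k', S k * S k' = S k' * S k := by
    intro k k'
    have h := hcomm k k'
    simp only [Matrix.smul_mul, Matrix.mul_smul, smul_smul] at h
    set p := (((M k ⊗ₖ (1 : Matrix (Fin nB) (Fin nB) ℂ)) * ρAB).trace)
    set q := (((M k' ⊗ₖ (1 : Matrix (Fin nB) (Fin nB) ℂ)) * ρAB).trace)
    have hpq : p⁻¹ * q⁻¹ ≠ 0 := by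
      exact mul_ne_zero (inv_ne_zero (hpk k)) (inv_ne_zero (hpk k'))
    rw [mul_comm q⁻¹ p⁻¹] at h
    exact smul_right_injective _ hpq h
  -- linear maps
  set T : ι → (EuclideanSpace ℂ (Fin nB) →ₗ[ℂ] EuclideanSpace ℂ (Fin nB)) :=
    fun k => Matrix.toEuclideanLin (S k) with hTdef
  have hTsym : ∀ k, (T k).IsSymmetric := fun k =>
    Matrix.isHermitian_iff_isSymmetric.mp (hSherm k)
  have hmulT : ∀ A B : Matrix (Fin nB) (Fin nB) ℂ,
      Matrix.toEuclideanLin A ∘ₗ Matrix.toEuclideanLin B = Matrix.toEuclideanLin (A * B) := by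
    intro A B
    apply LinearMap.ext
    intro x
    have : A *ᵥ (B *ᵥ (WithLp.equiv 2 _ x)) = (A * B) *ᵥ (WithLp.equiv 2 _ x) := by
      rw [Matrix.mulVec_mulVec]
    simpa [Matrix.toEuclideanLin_apply] using congrArg (WithLp.equiv 2 (Fin nB → ℂ)).symm this
  have hTcomm : Pairwise (Function.onFun Commute T) := by
    intro k k' _
    show T k * T k' = T k' * T k
    have h1 : T k * T k' = Matrix.toEuclideanLin (S k * S k') := hmulT _ _
    have h2 : T k' * T k = Matrix.toEuclideanLin (S k' * S k) := hmulT _ _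
    rw [h1, h2, hScomm]
  have hint := LinearMap.IsSymmetric.LinearMap.IsSymmetric.directSum_isInternal_of_pairwise_commute
    hTsym hTcomm
  have hfam := LinearMap.IsSymmetric.orthogonalFamily_iInf_eigenspaces hTsym
  have hn : Module.finrank ℂ (EuclideanSpace ℂ (Fin nB)) = nB := by
    simp [finrank_euclideanSpace]
  set V : (ι → ℂ) → Submodule ℂ (EuclideanSpace ℂ (Fin nB)) :=
    fun γ => ⨅ k, Module.End.eigenspace (T k) (γ k) with hVdef
  letI : Fintype {γ // V γ ≠ ⊥} := hint.submodule_iSupIndep.fintypeNeBotOfFiniteDimensional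
  have hint' : DirectSum.IsInternal (fun γ : {γ // V γ ≠ ⊥} => V γ.1) :=
    DirectSum.isInternal_ne_bot_iff.mpr hint
  have hfam' := hfam.comp
    (Subtype.val_injective : Function.Injective (Subtype.val : {γ // V γ ≠ ⊥} → (ι → ℂ)))
  set b := hint'.subordinateOrthonormalBasis hn hfam' with hbdef
  have heig : ∀ (j : Fin nB) (k : ι), ∃ c : ℂ, T k (b j) = c • b j := by
    intro j k
    have hmem := hint'.subordinateOrthonormalBasis_subordinate hn j hfam'
    have hmem2 : (b j : EuclideanSpace ℂ (Fin nB)) ∈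
        V (hint'.subordinateOrthonormalBasisIndex hn j hfam').1 := hmem
    simp only [hVdef] at hmem2
    rw [Submodule.mem_iInf] at hmem2
    exact ⟨_, Module.End.mem_eigenspace_iff.mp (hmem2 k)⟩
  set w : Fin nB → (Fin nB → ℂ) := fun j => WithLp.equiv 2 (Fin nB → ℂ) (b j) with hwdef
  have hONF : OrthonormalFam w := by
    intro j j'
    have h := orthonormal_iff_ite.mp b.orthonormal j j'
    rw [PiLp.inner_apply] at h
    simp only [RCLike.inner_apply] at h
    rw [← h]
    exact Finset.sum_congr rfl fun m _ => mul_comm _ _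
  have hSw : ∀ (k : ι) (j : Fin nB), (S k) *ᵥ (w j) ∈ Set.range (fun c : ℂ => c • (w j)) := by
    intro k j
    obtain ⟨c, hc⟩ := heig j k
    refine ⟨c, ?_⟩
    have h2 := congrArg (WithLp.equiv 2 (Fin nB → ℂ)) hc
    rw [WithLp.equiv_apply, WithLp.equiv_apply, Matrix.ofLp_toEuclideanLin_apply] at h2
    simpa [hwdef] using h2.symm
  have hkey : ∀ j j', j ≠ j' → ∀ a c : Fin nA,
      (∑ m, ∑ m', star (w j m) * ρAB (c, m) (a, m') * w j' m') = 0 := by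
    intro j j' hne a c
    have horth : (∑ m, star (w j m) * w j' m) = 0 := by
      have := hONF j j'
      rwa [if_neg hne] at this
    have hzero : ∀ X ∈ Submodule.span ℂ (Set.range M),
        star (w j) ⬝ᵥ ((ptraceA ((X ⊗ₖ (1 : Matrix (Fin nB) (Fin nB) ℂ)) * ρAB)) *ᵥ w j') = 0 := by
      intro X hX
      induction hX using Submodule.span_induction with
      | mem Y hY =>
        obtain ⟨k, rfl⟩ := hY
        obtain ⟨cc, hcc⟩ := hSw k j'
        rw [show ptraceA ((M k ⊗ₖ (1 : Matrix (Fin nB) (Fin nB) ℂ)) * ρAB) = S k from rfl,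
          ← hcc, dotProduct_smul]
        rw [show star (w j) ⬝ᵥ w j' = ∑ m, star (w j m) * w j' m from rfl, horth, smul_zero]
      | zero => rw [ptraceA_kron_zero]; simp
      | add Y Z hY hZ ihY ihZ =>
        rw [ptraceA_kron_add, Matrix.add_mulVec, dotProduct_add, ihY, ihZ, add_zero]
      | smul cc Y hY ihY =>
        rw [ptraceA_kron_smul, Matrix.smul_mulVec, dotProduct_smul, ihY, smul_zero]
    have hmem : (Matrix.single a c (1:ℂ)) ∈ Submodule.span ℂ (Set.range M) := by
      rw [hIC]; trivial
    have h := hzero _ hmem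
    rw [dot_mulVec_expand] at h
    rw [← h]
    exact Finset.sum_congr rfl fun m _ => Finset.sum_congr rfl fun m' _ => by
      rw [ptraceA_kron_std]
  set σ : Fin nB → Matrix (Fin nA) (Fin nA) ℂ :=
    fun j => Matrix.of fun ci ai => ∑ m, ∑ m', star (w j m) * ρAB (ci, m) (ai, m') * w j m'
    with hσdef
  refine ⟨w, σ, hONF, ?_, ?_⟩
  · intro j
    refine Matrix.PosSemidef.of_dotProduct_mulVec_nonneg ?_ ?_
    · ext ci ai
      rw [Matrix.conjTranspose_apply]
      show star (∑ m, ∑ m', star (w j m) * ρAB (ai, m) (ci, m') * w j m')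
        = ∑ m, ∑ m', star (w j m) * ρAB (ci, m) (ai, m') * w j m'
      simp only [star_sum]
      rw [Finset.sum_comm]
      refine Finset.sum_congr rfl fun m _ => Finset.sum_congr rfl fun m' _ => ?_
      simp only [star_mul', star_star]
      rw [hρAB.1.apply]
      ring
    · intro v
      set u : Fin nA × Fin nB → ℂ := fun p => v p.1 * w j p.2 with hudef
      have hqf : star v ⬝ᵥ ((σ j) *ᵥ v) = star u ⬝ᵥ (ρAB *ᵥ u) := by
        rw [dot_mulVec_expand, dot_mulVec_expand]
        simp only [Fintype.sum_prod_type, hσdef, Matrix.of_apply, hudef, star_mul',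
          Finset.mul_sum, Finset.sum_mul]
        refine Finset.sum_congr rfl fun c _ => ?_
        rw [Finset.sum_comm]
        exact Finset.sum_congr rfl fun m _ => Finset.sum_congr rfl fun a _ =>
          Finset.sum_congr rfl fun m' _ => by ring
      rw [hqf]
      exact hρAB.dotProduct_mulVec_nonneg u
  · set U : Matrix (Fin nB) (Fin nB) ℂ := Matrix.of fun m jj => w jj m with hUdef
    have hUU : Uᴴ * U = 1 := by
      ext j j'
      rw [Matrix.mul_apply, Matrix.one_apply, ← hONF j j']
      exact Finset.sum_congr rfl fun m _ => by
        simp [hUdef, Matrix.conjTranspose_apply]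
    have hUU2 : U * Uᴴ = 1 := mul_eq_one_comm.mp hUU
    ext ⟨ci, m⟩ ⟨ai, m'⟩
    set N : Matrix (Fin nB) (Fin nB) ℂ := Matrix.of fun s t => ρAB (ci, s) (ai, t) with hNdef
    have hGentry : ∀ jj jj', (Uᴴ * N * U) jj jj'
        = ∑ s, ∑ t, star (w jj s) * ρAB (ci, s) (ai, t) * w jj' t := by
      intro jj jj'
      simp only [Matrix.mul_apply, Matrix.conjTranspose_apply, hUdef, hNdef, Matrix.of_apply,
        Finset.sum_mul]
      rw [Finset.sum_comm]
    have hG0 : ∀ jj jj', jj ≠ jj' → (Uᴴ * N * U) jj jj' = 0 := by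
      intro jj jj' hne
      rw [hGentry]
      exact hkey jj jj' hne ai ci
    have hGd : ∀ jj, (Uᴴ * N * U) jj jj = σ jj ci ai := by
      intro jj
      rw [hGentry]
      rfl
    have hNid : N = U * (Uᴴ * N * U) * Uᴴ := by
      have h2 : U * (Uᴴ * N * U) * Uᴴ = (U * Uᴴ) * N * (U * Uᴴ) := by
        simp only [Matrix.mul_assoc]
      rw [h2, hUU2, Matrix.one_mul, Matrix.mul_one]
    have hexp : N m m' = ∑ jj, U m jj * (Uᴴ * N * U) jj jj * star (U m' jj) := by
      conv_lhs => rw [hNid]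
      rw [Matrix.mul_apply]
      refine Finset.sum_congr rfl fun t _ => ?_
      rw [Matrix.conjTranspose_apply, Matrix.mul_apply]
      have hcol : (∑ s, U m s * (Uᴴ * N * U) s t) = U m t * (Uᴴ * N * U) t t := by
        refine Finset.sum_eq_single t (fun s _ hs => ?_) (fun h => absurd (Finset.mem_univ t) h)
        rw [hG0 s t hs, mul_zero]
      rw [hcol]
    calc ρAB (ci, m) (ai, m') = N m m' := rfl
      _ = ∑ jj, U m jj * (Uᴴ * N * U) jj jj * star (U m' jj) := hexp
      _ = (∑ j, (σ j) ⊗ₖ outer (w j)) (ci, m) (ai, m') := by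
          rw [Matrix.sum_apply]
          refine Finset.sum_congr rfl fun jj _ => ?_
          rw [hGd jj]
          simp only [Matrix.kroneckerMap_apply, outer, hUdef, Matrix.of_apply]
          ring
end

section
/- A bipartite density operator ρ_AB on finite-dimensional H_A ⊗ H_B has zero-discord form Σ_j p_j ρ_j ⊗ |j⟩⟨j| (orthonormal {|j⟩}) if and only if there exists an orthonormal basis {|j⟩} of H_B such that ρ_AB commutes with I ⊗ |j⟩⟨j| for every j. -/
open Matrix Kronecker
open scoped ComplexOrder

/-- Rank-one cross product |u⟩⟨u'|. -/
noncomputable def cross {n : ℕ} (u u' : Fin n → ℂ) : Matrix (Fin n) (Fin n) ℂ :=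
  fun i i' => u i * star (u' i')

lemma outer_eq_cross {n : ℕ} (v : Fin n → ℂ) : outer v = cross v v := rfl

lemma cross_mul_cross {n : ℕ} (u v u' v' : Fin n → ℂ) :
    cross u v * cross u' v' = (∑ i, star (v i) * u' i) • cross u v' := by
  ext i i'
  simp only [Matrix.mul_apply, cross, Matrix.smul_apply, smul_eq_mul, Finset.sum_mul]
  exact Finset.sum_congr rfl fun k _ => by ring

lemma onf_complete {n : ℕ} {w : Fin n → Fin n → ℂ} (hw : OrthonormalFam w) :
    ∑ j, outer (w j) = 1 := by
  let U : Matrix (Fin n) (Fin n) ℂ := Matrix.of fun i j => w j i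
  have h1 : Uᴴ * U = 1 := by
    ext j j'
    simpa [Matrix.mul_apply, U, Matrix.conjTranspose_apply, Matrix.one_apply] using hw j j'
  have h2 : U * Uᴴ = 1 := mul_eq_one_comm.mp h1
  ext i i'
  have h3 := congrFun (congrFun h2 i) i'
  simp only [Matrix.mul_apply, Matrix.conjTranspose_apply, Matrix.of_apply, U] at h3
  simpa [Matrix.sum_apply, outer] using h3

lemma psd_trace_nonneg {n : ℕ} {M : Matrix (Fin n) (Fin n) ℂ} (hM : M.PosSemidef) :
    0 ≤ M.trace := by
  exact hM.trace_nonneg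

lemma psd_trace_eq_zero {n : ℕ} {M : Matrix (Fin n) (Fin n) ℂ} (hM : M.PosSemidef)
    (h : M.trace = 0) : M = 0 := by
  exact hM.trace_eq_zero_iff.mp h

lemma psd_smul {n : ℕ} {M : Matrix (Fin n) (Fin n) ℂ} (hM : M.PosSemidef) {c : ℝ}
    (hc : 0 ≤ c) : (((c : ℝ) : ℂ) • M).PosSemidef := by
  constructor
  · show (((c:ℝ):ℂ) • M)ᴴ = _
    rw [Matrix.conjTranspose_smul, hM.1.eq]
    simp [Complex.star_def, Complex.conj_ofReal]
  · exact (hM.smul (a := ((c : ℝ) : ℂ)) (by exact_mod_cast hc)).2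

lemma block_formula {nA nB : ℕ} (ρAB : Matrix (Fin nA × Fin nB) (Fin nA × Fin nB) ℂ)
    (w : Fin nB → ℂ) :
    ((1 : Matrix (Fin nA) (Fin nA) ℂ) ⊗ₖ outer w) * ρAB *
      ((1 : Matrix (Fin nA) (Fin nA) ℂ) ⊗ₖ outer w)
    = (Matrix.of fun a a' => ∑ b, ∑ b', star (w b) * (ρAB (a,b) (a',b') * w b')) ⊗ₖ outer w := by
  ext ⟨a,b⟩ ⟨a',b'⟩
  simp only [Matrix.mul_apply, kroneckerMap_apply, outer, Matrix.one_apply, Fintype.sum_prod_type,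
    ite_mul, zero_mul, one_mul, mul_ite, mul_zero, Finset.sum_ite_irrel, Finset.sum_const_zero,
    Finset.sum_ite_eq, Finset.sum_ite_eq',
    Finset.mem_univ, if_true, Matrix.of_apply, Finset.sum_mul, Finset.mul_sum]
  rw [Finset.sum_comm]
  refine Finset.sum_congr rfl fun d _ => Finset.sum_congr rfl fun d' _ => ?_
  ring

lemma sigma_psd {nA nB : ℕ} {ρAB : Matrix (Fin nA × Fin nB) (Fin nA × Fin nB) ℂ}
    (hρAB : ρAB.PosSemidef) (w : Fin nB → ℂ) :
    (Matrix.of fun a a' => ∑ b, ∑ b', star (w b) * (ρAB (a,b) (a',b') * w b') :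
      Matrix (Fin nA) (Fin nA) ℂ).PosSemidef := by
  let X : Matrix (Fin nA × Fin nB) (Fin nA) ℂ :=
    Matrix.of fun cd a => if cd.1 = a then w cd.2 else 0
  have hX : (Matrix.of fun a a' => ∑ b, ∑ b', star (w b) * (ρAB (a,b) (a',b') * w b') :
      Matrix (Fin nA) (Fin nA) ℂ) = Xᴴ * ρAB * X := by
    ext a a'
    simp only [Matrix.mul_apply, Matrix.conjTranspose_apply, Matrix.of_apply, X,
      Fintype.sum_prod_type, apply_ite, star_zero, ite_mul, zero_mul, mul_ite, mul_zero,
      Finset.sum_ite_irrel, Finset.sum_const_zero, Finset.sum_ite_eq, Finset.sum_ite_eq',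
      Finset.mem_univ, if_true, Finset.sum_mul, Finset.mul_sum]
    rw [Finset.sum_comm]
    refine Finset.sum_congr rfl fun d _ => Finset.sum_congr rfl fun d' _ => ?_
    ring
  rw [hX]
  exact hρAB.conjTranspose_mul_mul_same X

theorem stmt10 {nA nB : ℕ}
    (ρAB : Matrix (Fin nA × Fin nB) (Fin nA × Fin nB) ℂ)
    (hρAB : ρAB.PosSemidef) (hρtr : ρAB.trace = 1) :
    (∃ (m : ℕ) (v : Fin m → Fin nB → ℂ) (p : Fin m → ℝ)
        (ρ : Fin m → Matrix (Fin nA) (Fin nA) ℂ),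
      OrthonormalFam v ∧ (∀ j, 0 ≤ p j) ∧
      (∀ j, (ρ j).PosSemidef ∧ (ρ j).trace = 1) ∧
      ρAB = ∑ j, (p j : ℂ) • ((ρ j) ⊗ₖ outer (v j)))
    ↔
    (∃ w : Fin nB → Fin nB → ℂ, OrthonormalFam w ∧
      ∀ j, ρAB * ((1 : Matrix (Fin nA) (Fin nA) ℂ) ⊗ₖ outer (w j)) =
        ((1 : Matrix (Fin nA) (Fin nA) ℂ) ⊗ₖ outer (w j)) * ρAB) := by
  constructor
  · rintro ⟨m, v, p, ρ, hv, hp, hρ, hdecomp⟩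
    classical
    let V : Fin m → EuclideanSpace ℂ (Fin nB) := fun j => (WithLp.equiv 2 _).symm (v j)
    have hVorth : Orthonormal ℂ V := by
      rw [orthonormal_iff_ite]
      intro i j
      have := hv i j
      simpa [PiLp.inner_apply, RCLike.inner_apply, V, Complex.star_def, mul_comm] using this
    have hm : m ≤ nB := by
      have h1 := hVorth.linearIndependent.fintype_card_le_finrank
      simpa [finrank_euclideanSpace_fin] using h1
    set s : Set (Fin nB) := {i | (i : ℕ) < m} with hs
    let v' : Fin nB → EuclideanSpace ℂ (Fin nB) :=
      fun i => if h : (i : ℕ) < m then V ⟨i, h⟩ else 0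
    have hres : Orthonormal ℂ (s.restrict v') := by
      rw [orthonormal_iff_ite]
      rintro ⟨i, hi⟩ ⟨i', hi'⟩
      have hi2 : (i : ℕ) < m := hi
      have hi2' : (i' : ℕ) < m := hi'
      simp only [Set.restrict_apply, v', dif_pos hi2, dif_pos hi2']
      show inner ℂ (if h : (i : ℕ) < m then V ⟨i, h⟩ else 0)
        (if h : (i' : ℕ) < m then V ⟨i', h⟩ else 0) = _
      rw [dif_pos hi2, dif_pos hi2']
      rw [orthonormal_iff_ite.mp hVorth ⟨i, hi2⟩ ⟨i', hi2'⟩]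
      simp only [Fin.mk.injEq, Subtype.mk.injEq, Fin.ext_iff]
    have hcard : Module.finrank ℂ (EuclideanSpace ℂ (Fin nB)) = Fintype.card (Fin nB) := by
      simp [finrank_euclideanSpace_fin]
    obtain ⟨b, hb⟩ := hres.exists_orthonormalBasis_extension_of_card_eq hcard
    set w : Fin nB → Fin nB → ℂ := fun j i => b j i with hwdef
    have hwOrth : OrthonormalFam w := by
      intro j j'
      have := orthonormal_iff_ite.mp b.orthonormal j j'
      simpa [PiLp.inner_apply, RCLike.inner_apply, w, Complex.star_def, mul_comm] using this
    set emb : Fin m → Fin nB := fun k => ⟨k, lt_of_lt_of_le k.2 hm⟩ with hemb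
    have hbemb : ∀ k, b (emb k) = V k := by
      intro k
      have hmem : emb k ∈ s := k.2
      rw [hb (emb k) hmem]
      simp only [v', dif_pos (show ((emb k : Fin nB) : ℕ) < m from k.2)]
      rfl
    have hwv : ∀ k, w (emb k) = v k := by
      intro k
      funext i
      show b (emb k) i = v k i
      rw [hbemb k]
      rfl
    have hip1 : ∀ (k : Fin m) (j : Fin nB),
        (∑ i, star (w j i) * v k i) = if j = emb k then 1 else 0 := by
      intro k j
      have h1 := orthonormal_iff_ite.mp b.orthonormal j (emb k)
      rw [hbemb] at h1
      simpa [PiLp.inner_apply, RCLike.inner_apply, w, V, Complex.star_def, mul_comm] using h1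
    have hip2 : ∀ (k : Fin m) (j : Fin nB),
        (∑ i, star (v k i) * w j i) = if emb k = j then 1 else 0 := by
      intro k j
      have h1 := orthonormal_iff_ite.mp b.orthonormal (emb k) j
      rw [hbemb] at h1
      simpa [PiLp.inner_apply, RCLike.inner_apply, w, V, Complex.star_def, mul_comm] using h1
    refine ⟨w, hwOrth, fun j => ?_⟩
    rw [hdecomp, Matrix.sum_mul, Matrix.mul_sum]
    refine Finset.sum_congr rfl fun k _ => ?_
    rw [smul_mul_assoc, mul_smul_comm]
    congr 1
    rw [← Matrix.mul_kronecker_mul, ← Matrix.mul_kronecker_mul, mul_one, one_mul,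
      outer_eq_cross (v k), outer_eq_cross (w j), cross_mul_cross, cross_mul_cross,
      hip1 k j, hip2 k j]
    by_cases h : j = emb k
    · subst h
      rw [if_pos rfl, hwv k, one_smul]
    · rw [if_neg h, if_neg (fun h' => h h'.symm), zero_smul, zero_smul]
  · rintro ⟨w, hw, hcomm⟩
    classical
    have hA : Nonempty (Fin nA) := by
      by_contra h
      rw [not_nonempty_iff] at h
      rw [Matrix.trace, Finset.univ_eq_empty, Finset.sum_empty] at hρtr
      exact zero_ne_one hρtr
    have hnA : (nA : ℂ) ≠ 0 := by
      have : 0 < nA := Fin.pos_iff_nonempty.mpr hA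
      exact_mod_cast this.ne'
    -- fallback density matrix
    set τ : Matrix (Fin nA) (Fin nA) ℂ :=
      Matrix.diagonal (fun _ => (((nA : ℝ)⁻¹ : ℝ) : ℂ)) with hτ
    have hτpsd : τ.PosSemidef := by
      refine Matrix.posSemidef_diagonal_iff.mpr fun i => ?_
      have : (0:ℝ) ≤ (nA:ℝ)⁻¹ := inv_nonneg.mpr (Nat.cast_nonneg nA)
      exact_mod_cast this
    have hτtr : τ.trace = 1 := by
      rw [hτ, Matrix.trace_diagonal]
      simp only [Finset.sum_const, Finset.card_univ, Fintype.card_fin, nsmul_eq_mul]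
      push_cast
      exact mul_inv_cancel₀ hnA
    -- the blocks
    set σ : Fin nB → Matrix (Fin nA) (Fin nA) ℂ :=
      fun j => Matrix.of fun a a' => ∑ b, ∑ b', star (w j b) * (ρAB (a,b) (a',b') * w j b')
      with hσ
    have hσpsd : ∀ j, (σ j).PosSemidef := fun j => sigma_psd hρAB (w j)
    have hσtrnn : ∀ j, 0 ≤ (σ j).trace := fun j => psd_trace_nonneg (hσpsd j)
    set p : Fin nB → ℝ := fun j => ((σ j).trace).re with hpdef
    have hp : ∀ j, 0 ≤ p j := fun j => (Complex.nonneg_iff.mp (hσtrnn j)).1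
    have htrp : ∀ j, (σ j).trace = ((p j : ℝ) : ℂ) := by
      intro j
      obtain ⟨h1, h2⟩ := Complex.nonneg_iff.mp (hσtrnn j)
      exact Complex.ext rfl h2.symm
    set ρ : Fin nB → Matrix (Fin nA) (Fin nA) ℂ :=
      fun j => if p j = 0 then τ else ((p j : ℝ) : ℂ)⁻¹ • σ j with hρdef
    have hzero : ∀ j, p j = 0 → σ j = 0 := by
      intro j h
      refine psd_trace_eq_zero (hσpsd j) ?_
      rw [htrp j, h]
      norm_num
    have hρpsd : ∀ j, (ρ j).PosSemidef ∧ (ρ j).trace = 1 := by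
      intro j
      have hρj : ρ j = if p j = 0 then τ else ((p j : ℝ) : ℂ)⁻¹ • σ j := rfl
      rw [hρj]
      by_cases h : p j = 0
      · rw [if_pos h]
        exact ⟨hτpsd, hτtr⟩
      · rw [if_neg h]
        have hpne : ((p j : ℝ) : ℂ) ≠ 0 := Complex.ofReal_ne_zero.mpr h
        constructor
        · have := psd_smul (hσpsd j) (inv_nonneg.mpr (hp j))
          rwa [Complex.ofReal_inv] at this
        · rw [Matrix.trace_smul, htrp j, smul_eq_mul]
          exact inv_mul_cancel₀ hpne
    have hkey : ∀ j, ((p j : ℝ) : ℂ) • ρ j = σ j := by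
      intro j
      have hρj : ρ j = if p j = 0 then τ else ((p j : ℝ) : ℂ)⁻¹ • σ j := rfl
      rw [hρj]
      by_cases h : p j = 0
      · rw [if_pos h, hzero j h, h]
        simp
      · rw [if_neg h, smul_smul, mul_inv_cancel₀ (Complex.ofReal_ne_zero.mpr h), one_smul]
    -- projectors
    set P : Fin nB → Matrix (Fin nA × Fin nB) (Fin nA × Fin nB) ℂ :=
      fun j => (1 : Matrix (Fin nA) (Fin nA) ℂ) ⊗ₖ outer (w j) with hP
    have hPP : ∀ j, P j * P j = P j := by
      intro j
      rw [hP]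
      simp only
      rw [← Matrix.mul_kronecker_mul, one_mul, outer_eq_cross, cross_mul_cross, hw j j,
        if_pos rfl, one_smul]
    have hstep : ∀ j, ρAB * P j = σ j ⊗ₖ outer (w j) := by
      intro j
      calc ρAB * P j = ρAB * (P j * P j) := by rw [hPP]
        _ = (ρAB * P j) * P j := by rw [mul_assoc]
        _ = (P j * ρAB) * P j := by rw [hcomm j]
        _ = σ j ⊗ₖ outer (w j) := block_formula ρAB (w j)
    have hsum : ρAB = ∑ j, σ j ⊗ₖ outer (w j) := by
      have hk : (1 : Matrix (Fin nA) (Fin nA) ℂ) ⊗ₖ (∑ j, outer (w j))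
          = ∑ j, P j := by
        ext ⟨a,b⟩ ⟨c,d⟩
        simp [hP, kroneckerMap_apply, Matrix.sum_apply, Finset.mul_sum]
      calc ρAB = ρAB * ((1 : Matrix (Fin nA) (Fin nA) ℂ) ⊗ₖ (1 : Matrix (Fin nB) (Fin nB) ℂ)) := by
            rw [Matrix.one_kronecker_one, mul_one]
        _ = ρAB * (∑ j, P j) := by rw [← onf_complete hw, hk]
        _ = ∑ j, ρAB * P j := by rw [Matrix.mul_sum]
        _ = ∑ j, σ j ⊗ₖ outer (w j) := Finset.sum_congr rfl fun j _ => hstep j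
    refine ⟨nB, w, p, ρ, hw, hp, hρpsd, ?_⟩
    rw [hsum]
    refine Finset.sum_congr rfl fun j _ => ?_
    rw [← Matrix.smul_kronecker, hkey j]
end
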